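/- If x₁ lies in the quantization region of a logarithmic quantizer with quantized value q₁ (component-wise, with parameter η ∈ (0,1)), then ‖x₁ - q₁‖ ≤ θ‖q₁‖ where θ = η/(1-η) and ‖·‖ is the infinity norm, provided no component of q₁ is zero. -/
import Mathlib


/-- If `x` lies in the quantization region of the (component-wise)
logarithmic quantizer with quantized value `q` whose components are all nonzero
(i.e. for each `i`, `|q i|/(1+η) ≤ |x i| ≤ |q i|/(1-η)` and `x i`, `q i` have the
same sign), then `‖x - q‖ ≤ (η/(1-η)) * ‖q‖` in the infinity norm. -/
theorem log_quantizer_region_dist_bound {n : ℕ}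
    (η : ℝ) (hη : η ∈ Set.Ioo (0 : ℝ) 1)
    (x q : Fin n → ℝ)
    (hq0 : ∀ i, q i ≠ 0)
    (hlo : ∀ i, |q i| / (1 + η) ≤ |x i|)
    (hhi : ∀ i, |x i| ≤ |q i| / (1 - η))
    (hsign : ∀ i, 0 < x i * q i) :
    ‖x - q‖ ≤ (η / (1 - η)) * ‖q‖ := by
  obtain ⟨hη0, hη1⟩ := hη
  have h1m : (0:ℝ) < 1 - η := by linarith
  have h1p : (0:ℝ) < 1 + η := by linarith
  have hC : 0 ≤ (η / (1 - η)) * ‖q‖ := by positivity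
  rw [pi_norm_le_iff_of_nonneg hC]
  intro i
  have hqi : |q i| ≤ ‖q‖ := by simpa using norm_le_pi_norm q i
  have key : |x i - q i| ≤ (η / (1 - η)) * |q i| := by
    have habs : |x i - q i| = |(|x i| - |q i|)| := by
      rcases lt_or_gt_of_ne (hq0 i) with hq | hq
      · have hx : x i < 0 := by nlinarith [hsign i]
        rw [abs_of_neg hq, abs_of_neg hx, abs_sub_comm]
        congr 1; ring
      · have hx : 0 < x i := by nlinarith [hsign i]
        rw [abs_of_pos hq, abs_of_pos hx]
    have h1 : |x i| * (1 - η) ≤ |q i| := by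
      have := hhi i
      rw [le_div_iff₀ h1m] at this
      linarith
    have h2 : |q i| ≤ |x i| * (1 + η) := by
      have := hlo i
      rw [div_le_iff₀ h1p] at this
      linarith
    rw [habs, div_mul_eq_mul_div, le_div_iff₀ h1m]
    rcases abs_cases (|x i| - |q i|) with ⟨heq, _⟩ | ⟨heq, _⟩ <;> rw [heq] <;>
      nlinarith [abs_nonneg (x i), abs_nonneg (q i)]
  calc ‖(x - q) i‖ = |x i - q i| := by simp [Real.norm_eq_abs]
    _ ≤ (η / (1 - η)) * |q i| := key
    _ ≤ (η / (1 - η)) * ‖q‖ := by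
        apply mul_le_mul_of_nonneg_left hqi (by positivity)
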